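/- For every integer m ≥ 2, the sum of 1/(2 - ξ - ξ̄) over all m-th roots of unity ξ ≠ 1 equals (m² - 1)/12. -/

import Mathlib

open Finset Polynomial

private lemma sumj (n : ℕ) (x : ℂ) :
    (x - 1) ^ 2 * ∑ j ∈ range n, (j : ℂ) * x ^ j
      = ((n : ℂ) - 1) * x ^ (n + 1) - n * x ^ n + x := by
  induction n with
  | zero => simp
  | succ n ih =>
    rw [Finset.sum_range_succ, mul_add, ih]
    push_cast
    ring

private lemma sumj2 (n : ℕ) (x : ℂ) :
    (x - 1) ^ 3 * ∑ j ∈ range n, (j : ℂ) ^ 2 * x ^ j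
      = ((n : ℂ) - 1) ^ 2 * x ^ (n + 2) - (2 * n ^ 2 - 2 * n - 1) * x ^ (n + 1)
        + n ^ 2 * x ^ n - x ^ 2 - x := by
  induction n with
  | zero => simp
  | succ n ih =>
    rw [Finset.sum_range_succ, mul_add, ih]
    push_cast
    ring

private lemma sumc1 (n : ℕ) : ∑ j ∈ range n, (j : ℂ) = n * (n - 1) / 2 := by
  induction n with
  | zero => simp
  | succ n ih =>
    rw [Finset.sum_range_succ, ih]
    push_cast
    ring

private lemma sumc2 (n : ℕ) : ∑ j ∈ range n, (j : ℂ) ^ 2 = n * (n - 1) * (2 * n - 1) / 6 := by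
  induction n with
  | zero => simp
  | succ n ih =>
    rw [Finset.sum_range_succ, ih]
    push_cast
    ring

private lemma key (m : ℕ) (hm : 2 ≤ m) (ξ : ℂ) (h1 : ξ ^ m = 1) (hne : ξ ≠ 1) :
    1 / (2 - ξ - ξ⁻¹) = (∑ j ∈ range m, ((j : ℂ) ^ 2 - m * j) * ξ ^ j) / (2 * m) := by
  have hm0 : (m : ℂ) ≠ 0 := Nat.cast_ne_zero.mpr (by omega)
  have hξ0 : ξ ≠ 0 := by
    intro h; rw [h, zero_pow (by omega)] at h1; exact zero_ne_one h1
  have hsub : ξ - 1 ≠ 0 := sub_ne_zero.mpr hne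
  have hp1 : ξ ^ (m + 1) = ξ := by rw [pow_succ, h1, one_mul]
  have hp2 : ξ ^ (m + 2) = ξ ^ 2 := by rw [pow_add, h1, one_mul]
  have hA := sumj m ξ
  have hB := sumj2 m ξ
  rw [hp1, h1] at hA
  rw [hp2, hp1, h1] at hB
  set A := ∑ j ∈ range m, (j : ℂ) * ξ ^ j with hAdef
  set B := ∑ j ∈ range m, (j : ℂ) ^ 2 * ξ ^ j with hBdef
  have hsplit : ∑ j ∈ range m, ((j : ℂ) ^ 2 - m * j) * ξ ^ j = B - m * A := by
    rw [hAdef, hBdef, Finset.mul_sum, ← Finset.sum_sub_distrib]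
    apply Finset.sum_congr rfl
    intro j _
    ring
  rw [hsplit]
  have E3 : (B - m * A) * (ξ - 1) ^ 3 = -2 * m * ξ * (ξ - 1) := by
    linear_combination hB - (m : ℂ) * (ξ - 1) * hA
  have E2 : (B - m * A) * (ξ - 1) ^ 2 = -2 * m * ξ := by
    apply mul_left_cancel₀ hsub
    linear_combination E3
  have hden : 2 - ξ - ξ⁻¹ = -(ξ - 1) ^ 2 / ξ := by
    field_simp
    ring
  rw [hden, one_div_div]
  rw [div_eq_div_iff (by simp [hsub]) (by simp [hm0])]
  linear_combination E2

theorem stmt_3 (m : ℕ) (hm : 2 ≤ m) :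
    ∑ ξ ∈ ((Polynomial.nthRoots m (1 : ℂ)).toFinset.erase 1),
        1 / (2 - ξ - (starRingEnd ℂ) ξ)
      = ((m : ℂ) ^ 2 - 1) / 12 := by
  have hm0 : m ≠ 0 := by omega
  have hmC : (m : ℂ) ≠ 0 := Nat.cast_ne_zero.mpr hm0
  obtain ⟨ζ, hζ⟩ : ∃ ζ : ℂ, IsPrimitiveRoot ζ m :=
    ⟨_, Complex.isPrimitiveRoot_exp m hm0⟩
  -- the erased finset is the image of Ico 1 m under (ζ ^ ·)
  have hset : ((Polynomial.nthRoots m (1 : ℂ)).toFinset.erase 1)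
      = (Finset.Ico 1 m).image (fun k => ζ ^ k) := by
    ext x
    simp only [Finset.mem_erase, Multiset.mem_toFinset, Polynomial.mem_nthRoots
      (Nat.pos_of_ne_zero hm0), Finset.mem_image, Finset.mem_Ico]
    constructor
    · rintro ⟨hx1, hxm⟩
      haveI : NeZero m := ⟨hm0⟩
      obtain ⟨i, hi, rfl⟩ := hζ.eq_pow_of_pow_eq_one hxm
      refine ⟨i, ⟨?_, hi⟩, rfl⟩
      rcases Nat.eq_zero_or_pos i with h | h
      · exfalso; apply hx1; rw [h, pow_zero]
      · exact h
    · rintro ⟨k, ⟨hk1, hkm⟩, rfl⟩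
      refine ⟨hζ.pow_ne_one_of_pos_of_lt (by omega) hkm, ?_⟩
      rw [← pow_mul, mul_comm, pow_mul, hζ.pow_eq_one, one_pow]
  rw [hset]
  rw [Finset.sum_image (fun a ha b hb h =>
    hζ.pow_inj (Finset.mem_Ico.mp ha).2 (Finset.mem_Ico.mp hb).2 h)]
  -- rewrite each summand
  have hterm : ∀ k ∈ Finset.Ico 1 m,
      1 / (2 - ζ ^ k - (starRingEnd ℂ) (ζ ^ k))
        = (∑ j ∈ range m, ((j : ℂ) ^ 2 - m * j) * (ζ ^ j) ^ k) / (2 * m) := by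
    intro k hk
    obtain ⟨hk1, hkm⟩ := Finset.mem_Ico.mp hk
    have hpow : (ζ ^ k) ^ m = 1 := by
      rw [← pow_mul, mul_comm, pow_mul, hζ.pow_eq_one, one_pow]
    have hne : ζ ^ k ≠ 1 := hζ.pow_ne_one_of_pos_of_lt (by omega) hkm
    have hconj : (starRingEnd ℂ) (ζ ^ k) = (ζ ^ k)⁻¹ :=
      (Complex.inv_eq_conj (Complex.norm_eq_one_of_pow_eq_one hpow hm0)).symm
    rw [hconj, key m hm (ζ ^ k) hpow hne]
    congr 1
    apply Finset.sum_congr rfl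
    intro j _
    have hpk : (ζ ^ k) ^ j = (ζ ^ j) ^ k := by
      rw [← pow_mul, ← pow_mul, mul_comm]
    rw [hpk]
  rw [Finset.sum_congr rfl hterm, ← Finset.sum_div, Finset.sum_comm]
  -- inner sums
  have hinner : ∀ j ∈ range m,
      ∑ k ∈ Finset.Ico 1 m, ((j : ℂ) ^ 2 - m * j) * (ζ ^ j) ^ k
        = -(((j : ℂ) ^ 2 - m * j)) := by
    intro j hj
    have hjm := Finset.mem_range.mp hj
    rw [← Finset.mul_sum]
    rcases Nat.eq_zero_or_pos j with h | h
    · subst h; simp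
    · have hne : ζ ^ j ≠ 1 := hζ.pow_ne_one_of_pos_of_lt h.ne' hjm
      have hpow : (ζ ^ j) ^ m = 1 := by
        rw [← pow_mul, mul_comm, pow_mul, hζ.pow_eq_one, one_pow]
      have hgeom : ∑ k ∈ Finset.range m, (ζ ^ j) ^ k = 0 := by
        rw [geom_sum_eq hne, hpow, sub_self, zero_div]
      have : ∑ k ∈ Finset.Ico 1 m, (ζ ^ j) ^ k
          = (∑ k ∈ Finset.range m, (ζ ^ j) ^ k) - ∑ k ∈ Finset.range 1, (ζ ^ j) ^ k := by
        rw [Finset.sum_Ico_eq_sub _ (by omega)]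
      rw [this, hgeom]
      simp
  rw [Finset.sum_congr rfl hinner]
  -- now a pure computation
  have hsplit2 : ∑ j ∈ range m, -((j : ℂ) ^ 2 - m * j)
      = m * (∑ j ∈ range m, (j : ℂ)) - ∑ j ∈ range m, (j : ℂ) ^ 2 := by
    rw [Finset.mul_sum, ← Finset.sum_sub_distrib]
    exact Finset.sum_congr rfl (fun j _ => by ring)
  rw [hsplit2, sumc1, sumc2]
  field_simp
  ring
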